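/- The number of Steiner triple systems on an n-element point set that admit at least one non-identity automorphism is at most n!·(8ne/5)^{5n²/48}. -/

import Mathlib

open scoped Classical


/-- A Steiner triple system on the point set `Fin n`: a collection of
3-element blocks such that every 2-element subset of points lies in exactly
one block. -/
def IsSTS (n : ℕ) (B : Finset (Finset (Fin n))) : Prop :=
  (∀ b ∈ B, b.card = 3) ∧
  ∀ p : Finset (Fin n), p.card = 2 → ∃! b, b ∈ B ∧ p ⊆ b

/-- `g` is an automorphism of the Steiner triple system `B`: the image of
every block is a block. -/
def IsSTSAuto (n : ℕ) (B : Finset (Finset (Fin n))) (g : Equiv.Perm (Fin n)) : Prop :=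
  ∀ b ∈ B, b.image g ∈ B

namespace STSAux

variable {n : ℕ}

noncomputable def psi (g : Equiv.Perm (Fin n)) : Equiv.Perm (Finset (Fin n)) :=
  g.finsetCongr

lemma psi_apply (g : Equiv.Perm (Fin n)) (b : Finset (Fin n)) :
    psi g b = b.image g := by
  simp [psi, Equiv.finsetCongr_apply, Finset.map_eq_image]

lemma block_unique {B : Finset (Finset (Fin n))} (hB : IsSTS n B)
    {p b b' : Finset (Fin n)} (hp : p.card = 2) (hb : b ∈ B) (hb' : b' ∈ B)
    (h1 : p ⊆ b) (h2 : p ⊆ b') : b = b' := by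
  obtain ⟨u, -, hu⟩ := hB.2 p hp
  rw [hu b ⟨hb, h1⟩, hu b' ⟨hb', h2⟩]

lemma image_psi_eq {B : Finset (Finset (Fin n))} {g : Equiv.Perm (Fin n)}
    (hg : IsSTSAuto n B g) : B.image (psi g) = B := by
  apply Finset.eq_of_subset_of_card_le
  · intro c hc
    obtain ⟨b, hb, rfl⟩ := Finset.mem_image.1 hc
    rw [psi_apply]; exact hg b hb
  · rw [Finset.card_image_of_injective _ (psi g).injective]

lemma mem_of_psi_pow {B : Finset (Finset (Fin n))} {g : Equiv.Perm (Fin n)}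
    (hg : IsSTSAuto n B g) (k : ℕ) {b : Finset (Fin n)} (hb : b ∈ B) :
    ((psi g) ^ k) b ∈ B := by
  induction k generalizing b with
  | zero => simpa using hb
  | succ k ih =>
      rw [pow_succ]
      have h2 : ((psi g) ^ k * psi g) b = ((psi g) ^ k) (psi g b) := rfl
      rw [h2]
      exact ih (by rw [psi_apply]; exact hg b hb)

lemma mem_of_sameCycle {B : Finset (Finset (Fin n))} {g : Equiv.Perm (Fin n)}
    (hg : IsSTSAuto n B g) {b c : Finset (Fin n)} (hb : b ∈ B)
    (h : (psi g).SameCycle b c) : c ∈ B := by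
  obtain ⟨i, -, hi⟩ := h.exists_pow_eq'
  exact hi ▸ mem_of_psi_pow hg i hb


lemma pairset_disj {B : Finset (Finset (Fin n))} (hB : IsSTS n B)
    {C : Finset (Finset (Fin n))} (hC : C ⊆ B) :
    ∀ b1 ∈ C, ∀ b2 ∈ C, b1 ≠ b2 →
      Disjoint (b1.powersetCard 2) (b2.powersetCard 2) := by
  intro b1 h1 b2 h2 hne
  rw [Finset.disjoint_left]
  intro p hp1 hp2
  rw [Finset.mem_powersetCard] at hp1 hp2
  exact hne (block_unique hB hp1.2 (hC h1) (hC h2) hp1.1 hp2.1)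

lemma card_biUnion_pairs {B : Finset (Finset (Fin n))} (hB : IsSTS n B)
    {C : Finset (Finset (Fin n))} (hC : C ⊆ B) :
    (C.biUnion (fun b => b.powersetCard 2)).card = 3 * C.card := by
  rw [Finset.card_biUnion (pairset_disj hB hC)]
  rw [Finset.sum_congr rfl (fun b hb => ?_), Finset.sum_const, smul_eq_mul,
    Nat.mul_comm]
  rw [Finset.card_powersetCard, hB.1 b (hC hb)]
  decide

lemma count_blocks {B : Finset (Finset (Fin n))} (hB : IsSTS n B) :
    3 * B.card = n.choose 2 := by
  have h1 : B.biUnion (fun b => b.powersetCard 2) =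
      (Finset.univ : Finset (Fin n)).powersetCard 2 := by
    apply Finset.Subset.antisymm
    · intro p hp
      rw [Finset.mem_biUnion] at hp
      obtain ⟨b, -, hpb⟩ := hp
      rw [Finset.mem_powersetCard] at hpb ⊢
      exact ⟨Finset.subset_univ _, hpb.2⟩
    · intro p hp
      rw [Finset.mem_powersetCard] at hp
      obtain ⟨b, ⟨hbB, hpb⟩, -⟩ := hB.2 p hp.2
      rw [Finset.mem_biUnion]
      exact ⟨b, hbB, Finset.mem_powersetCard.2 ⟨hpb, hp.2⟩⟩
  have h2 := card_biUnion_pairs hB (Finset.Subset.refl B)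
  rw [h1] at h2
  rw [← h2, Finset.card_powersetCard, Finset.card_univ, Fintype.card_fin]

lemma count_blocks_in {B : Finset (Finset (Fin n))} (hB : IsSTS n B)
    (S : Finset (Fin n)) :
    3 * (B.filter (fun b => b ⊆ S)).card ≤ S.card.choose 2 := by
  have h2 := card_biUnion_pairs hB (Finset.filter_subset (fun b => b ⊆ S) B)
  rw [← h2, ← Finset.card_powersetCard]
  apply Finset.card_le_card
  intro p hp
  rw [Finset.mem_biUnion] at hp
  obtain ⟨b, hb, hpb⟩ := hp
  rw [Finset.mem_filter] at hb
  rw [Finset.mem_powersetCard] at hpb ⊢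
  exact ⟨hpb.1.trans hb.2, hpb.2⟩


noncomputable def Fx (g : Equiv.Perm (Fin n)) : Finset (Fin n) :=
  Finset.univ.filter (fun x => g x = x)

lemma mem_Fx {g : Equiv.Perm (Fin n)} {x : Fin n} : x ∈ Fx g ↔ g x = x := by
  simp [Fx]

lemma third_point {b p : Finset (Fin n)} (hb3 : b.card = 3) (hp : p.card = 2)
    (hpb : p ⊆ b) : ∃ z, z ∉ p ∧ b = insert z p := by
  have h1 : (b \ p).card = 1 := by
    rw [Finset.card_sdiff_of_subset hpb, hb3, hp]
  obtain ⟨z, hz⟩ := Finset.card_eq_one.1 h1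
  have hzb : z ∈ b \ p := hz ▸ Finset.mem_singleton_self z
  rw [Finset.mem_sdiff] at hzb
  refine ⟨z, hzb.2, ?_⟩
  apply (Finset.eq_of_subset_of_card_le ?_ ?_).symm
  · intro a ha
    rcases Finset.mem_insert.1 ha with rfl | h
    · exact hzb.1
    · exact hpb h
  · rw [hb3, Finset.card_insert_of_notMem hzb.2, hp]

lemma block_fixed {B : Finset (Finset (Fin n))} {g : Equiv.Perm (Fin n)}
    (hB : IsSTS n B) (hg : IsSTSAuto n B g) {b p : Finset (Fin n)}
    (hb : b ∈ B) (hp : p.card = 2) (hpb : p ⊆ b)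
    (hfix : ∀ a ∈ p, g a = a) : ∀ a ∈ b, g a = a := by
  have himg : b.image g = b := by
    refine block_unique hB hp (hg b hb) hb ?_ hpb
    intro a ha
    rw [← hfix a ha]
    exact Finset.mem_image_of_mem g (hpb ha)
  obtain ⟨z, hzp, rfl⟩ := third_point (hB.1 b hb) hp hpb
  have hgz : g z = z := by
    have hz : g z ∈ insert z p := by
      rw [← himg]; exact Finset.mem_image_of_mem g (Finset.mem_insert_self z p)
    rcases Finset.mem_insert.1 hz with h | h
    · exact h
    · exfalso
      have := hfix (g z) h
      have hzz : g z = z := by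
        have := g.injective (by rw [this] : g (g z) = g z)
        exact this.symm ▸ this
      exact hzp (hzz ▸ h)
  intro a ha
  rcases Finset.mem_insert.1 ha with rfl | h
  · exact hgz
  · exact hfix a h

lemma fx_card_bound {B : Finset (Finset (Fin n))} {g : Equiv.Perm (Fin n)}
    (hB : IsSTS n B) (hg : IsSTSAuto n B g) (hgne : g ≠ 1) :
    2 * (Fx g).card + 1 ≤ n := by
  have hx : ∃ x, g x ≠ x := by
    by_contra h
    push_neg at h
    exact hgne (Equiv.ext h)
  obtain ⟨x, hx⟩ := hx
  have hxF : x ∉ Fx g := fun h => hx (mem_Fx.1 h)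
  set Q : Fin n → Fin n → Prop := fun f z =>
    z ∉ ({x, f} : Finset (Fin n)) ∧
    ∃ b ∈ B, ({x, f} : Finset (Fin n)) ⊆ b ∧ b = insert z ({x, f} : Finset (Fin n))
    with hQ
  have hpcard : ∀ f ∈ Fx g, ({x, f} : Finset (Fin n)).card = 2 := by
    intro f hf
    exact Finset.card_pair (fun h => hxF (h ▸ hf))
  have hQex : ∀ f ∈ Fx g, ∃ z, Q f z := by
    intro f hf
    obtain ⟨b, ⟨hbB, hpb⟩, -⟩ := hB.2 _ (hpcard f hf)
    obtain ⟨z, hz1, hz2⟩ := third_point (hB.1 b hbB) (hpcard f hf) hpb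
    exact ⟨z, hz1, b, hbB, hpb, hz2⟩
  set θ : Fin n → Fin n := fun f => if h : ∃ z, Q f z then h.choose else x with hθ
  have hθQ : ∀ f ∈ Fx g, Q f (θ f) := by
    intro f hf
    have h := hQex f hf
    simp only [hθ, dif_pos h]
    exact h.choose_spec
  have hnotF : ∀ f ∈ Fx g, θ f ∉ Fx g := by
    intro f hf hmem
    obtain ⟨hz1, b, hbB, hpb, hbz⟩ := hθQ f hf
    have hfz : f ≠ θ f := by
      intro h; exact hz1 (h ▸ Finset.mem_insert_of_mem (Finset.mem_singleton_self f))
    have hp2 : ({f, θ f} : Finset (Fin n)).card = 2 := Finset.card_pair hfz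
    have hsub : ({f, θ f} : Finset (Fin n)) ⊆ b := by
      intro a ha
      rw [Finset.mem_insert, Finset.mem_singleton] at ha
      rcases ha with h | h
      · rw [h]; exact hpb (by simp)
      · rw [h, hbz]; exact Finset.mem_insert_self _ _
    have hall := block_fixed hB hg hbB hp2 hsub (by
      intro a ha
      rw [Finset.mem_insert, Finset.mem_singleton] at ha
      rcases ha with h | h
      · rw [h]; exact mem_Fx.1 hf
      · rw [h]; exact mem_Fx.1 hmem)
    exact hx (hall x (hpb (Finset.mem_insert_self x _)))
  have hinj : Set.InjOn θ (Fx g : Set (Fin n)) := by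
    intro f hf f' hf' heq
    obtain ⟨hz1, b, hbB, hpb, hbz⟩ := hθQ f hf
    obtain ⟨hz1', b', hbB', hpb', hbz'⟩ := hθQ f' hf'
    have hzx : θ f ≠ x := fun h => hz1 (by rw [h]; simp)
    have hp2 : ({x, θ f} : Finset (Fin n)).card = 2 :=
      Finset.card_pair (fun h => hzx h.symm)
    have hbb' : b = b' := by
      refine block_unique hB hp2 hbB hbB' ?_ ?_
      · intro a ha
        rw [Finset.mem_insert, Finset.mem_singleton] at ha
        rcases ha with h | h
        · rw [h]; exact hpb (Finset.mem_insert_self x _)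
        · rw [h, hbz]; exact Finset.mem_insert_self _ _
      · intro a ha
        rw [Finset.mem_insert, Finset.mem_singleton] at ha
        rcases ha with h | h
        · rw [h]; exact hpb' (Finset.mem_insert_self x _)
        · rw [h, heq, hbz']; exact Finset.mem_insert_self _ _
    have hfb' : f ∈ insert (θ f') ({x, f'} : Finset (Fin n)) := by
      rw [← hbz', ← hbb', hbz]
      simp
    rcases Finset.mem_insert.1 hfb' with h | h
    · exact absurd (h ▸ hf) (heq ▸ hnotF f' hf')
    · rcases Finset.mem_insert.1 h with h | h
      · exact absurd (h ▸ hf) hxF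
      · exact Finset.mem_singleton.1 h
  have hmaps : ∀ f ∈ Fx g, θ f ∈ Finset.univ \ insert x (Fx g) := by
    intro f hf
    rw [Finset.mem_sdiff]
    refine ⟨Finset.mem_univ _, ?_⟩
    intro h
    rcases Finset.mem_insert.1 h with h | h
    · exact absurd h (fun h => (hθQ f hf).1 (by rw [h]; simp))
    · exact hnotF f hf h
  have hle := Finset.card_le_card_of_injOn θ hmaps hinj
  have h1 : (Finset.univ \ insert x (Fx g)).card = n - (insert x (Fx g)).card := by
    rw [Finset.card_sdiff_of_subset (Finset.subset_univ _), Finset.card_univ, Fintype.card_fin]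
  have h2 : (insert x (Fx g)).card = (Fx g).card + 1 :=
    Finset.card_insert_of_notMem hxF
  have h3 : (insert x (Fx g)).card ≤ n := by
    simpa using Finset.card_le_univ (insert x (Fx g))
  omega


lemma two_mul_choose_two (m : ℕ) : 2 * m.choose 2 = m * (m - 1) := by
  rw [Nat.choose_two_right]
  rw [Nat.mul_div_cancel']
  rcases m with - | k
  · simp
  · have h := (Nat.even_mul_succ_self k).two_dvd
    simpa [Nat.mul_comm] using h

lemma six_mul_card (hB : IsSTS n B) : 6 * B.card = n * (n - 1) := by
  have h := count_blocks hB
  have h2 := two_mul_choose_two n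
  omega

noncomputable def movedIn (g : Equiv.Perm (Fin n)) (b : Finset (Fin n)) :
    Finset (Fin n) := b.filter (fun a => g a ≠ a)

lemma moved_pair {B : Finset (Finset (Fin n))} {g : Equiv.Perm (Fin n)}
    (hg : IsSTSAuto n B g) {b : Finset (Fin n)} (hb : b ∈ B)
    (hfb : psi g b = b) {a : Fin n} (ha : a ∈ b) (hma : g a ≠ a) :
    g a ∈ b ∧ g (g a) ≠ g a ∧ a ≠ g a := by
  have h1 : g a ∈ b := by
    have h := Finset.mem_image_of_mem g ha
    rw [← psi_apply, hfb] at h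
    exact h
  refine ⟨h1, ?_, fun h => hma h.symm⟩
  intro h
  exact hma (g.injective h)

lemma fixed_not_sub_card {B : Finset (Finset (Fin n))} {g : Equiv.Perm (Fin n)}
    (hB : IsSTS n B) (hg : IsSTSAuto n B g) :
    2 * (B.filter (fun b => psi g b = b ∧ ¬ b ⊆ Fx g)).card ≤ n := by
  set D := B.filter (fun b => psi g b = b ∧ ¬ b ⊆ Fx g) with hD
  have hmem : ∀ b ∈ D, b ∈ B ∧ psi g b = b ∧ ¬ b ⊆ Fx g := by
    intro b hb; rw [hD, Finset.mem_filter] at hb; exact ⟨hb.1, hb.2⟩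
  have hdisj : ∀ b1 ∈ D, ∀ b2 ∈ D, b1 ≠ b2 →
      Disjoint (movedIn g b1) (movedIn g b2) := by
    intro b1 h1 b2 h2 hne
    rw [Finset.disjoint_left]
    intro a ha1 ha2
    rw [movedIn, Finset.mem_filter] at ha1 ha2
    obtain ⟨hb1B, hf1, -⟩ := hmem b1 h1
    obtain ⟨hb2B, hf2, -⟩ := hmem b2 h2
    obtain ⟨hga1, -, hne1⟩ := moved_pair hg hb1B hf1 ha1.1 ha1.2
    obtain ⟨hga2, -, -⟩ := moved_pair hg hb2B hf2 ha2.1 ha2.2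
    apply hne
    refine block_unique hB (Finset.card_pair hne1) hb1B hb2B ?_ ?_
    · intro c hc
      rw [Finset.mem_insert, Finset.mem_singleton] at hc
      rcases hc with h | h
      · rw [h]; exact ha1.1
      · rw [h]; exact hga1
    · intro c hc
      rw [Finset.mem_insert, Finset.mem_singleton] at hc
      rcases hc with h | h
      · rw [h]; exact ha2.1
      · rw [h]; exact hga2
  have hcard2 : ∀ b ∈ D, 2 ≤ (movedIn g b).card := by
    intro b hb
    obtain ⟨hbB, hf, hns⟩ := hmem b hb
    obtain ⟨a, ha, hma⟩ : ∃ a ∈ b, g a ≠ a := by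
      by_contra h
      push_neg at h
      exact hns (fun a ha => mem_Fx.2 (h a ha))
    obtain ⟨hga, hgga, hne1⟩ := moved_pair hg hbB hf ha hma
    have hsub : ({a, g a} : Finset (Fin n)) ⊆ movedIn g b := by
      intro c hc
      rw [Finset.mem_insert, Finset.mem_singleton] at hc
      rw [movedIn, Finset.mem_filter]
      rcases hc with h | h
      · rw [h]; exact ⟨ha, hma⟩
      · rw [h]; exact ⟨hga, hgga⟩
    calc 2 = ({a, g a} : Finset (Fin n)).card := (Finset.card_pair hne1).symm
    _ ≤ _ := Finset.card_le_card hsub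
  calc 2 * D.card = ∑ _b ∈ D, 2 := by rw [Finset.sum_const, smul_eq_mul, Nat.mul_comm]
  _ ≤ ∑ b ∈ D, (movedIn g b).card := Finset.sum_le_sum hcard2
  _ = (D.biUnion (movedIn g)).card := (Finset.card_biUnion hdisj).symm
  _ ≤ Finset.univ.card := Finset.card_le_univ _
  _ = n := by rw [Finset.card_univ, Fintype.card_fin]

noncomputable def orbitF (g : Equiv.Perm (Fin n)) (B : Finset (Finset (Fin n)))
    (b : Finset (Fin n)) : Finset (Finset (Fin n)) :=
  B.filter (fun c => (psi g).SameCycle b c)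

noncomputable def Orbs (g : Equiv.Perm (Fin n)) (B : Finset (Finset (Fin n))) :
    Finset (Finset (Finset (Fin n))) :=
  B.image (orbitF g B)

lemma orbitF_eq_of_sameCycle {g : Equiv.Perm (Fin n)} {B : Finset (Finset (Fin n))}
    {b b' : Finset (Fin n)} (h : (psi g).SameCycle b b') :
    orbitF g B b = orbitF g B b' := by
  unfold orbitF
  apply Finset.filter_congr
  intro c _
  exact ⟨fun hc => h.symm.trans hc, fun hc => h.trans hc⟩

lemma self_mem_orbitF {g : Equiv.Perm (Fin n)} {B : Finset (Finset (Fin n))}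
    {b : Finset (Fin n)} (hb : b ∈ B) : b ∈ orbitF g B b := by
  rw [orbitF, Finset.mem_filter]
  exact ⟨hb, Equiv.Perm.SameCycle.refl _ _⟩

lemma orbs_disjoint {g : Equiv.Perm (Fin n)} {B : Finset (Finset (Fin n))} :
    ∀ o1 ∈ Orbs g B, ∀ o2 ∈ Orbs g B, o1 ≠ o2 → Disjoint o1 o2 := by
  intro o1 h1 o2 h2 hne
  obtain ⟨b1, hb1, rfl⟩ := Finset.mem_image.1 h1
  obtain ⟨b2, hb2, rfl⟩ := Finset.mem_image.1 h2
  rw [Finset.disjoint_left]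
  intro c hc1 hc2
  rw [orbitF, Finset.mem_filter] at hc1 hc2
  exact hne (orbitF_eq_of_sameCycle (hc1.2.trans hc2.2.symm))

lemma orbs_biUnion {g : Equiv.Perm (Fin n)} {B : Finset (Finset (Fin n))} :
    (Orbs g B).biUnion (fun o => o) = B := by
  apply Finset.Subset.antisymm
  · intro c hc
    rw [Finset.mem_biUnion] at hc
    obtain ⟨o, ho, hco⟩ := hc
    obtain ⟨b, -, rfl⟩ := Finset.mem_image.1 ho
    exact (Finset.mem_filter.1 hco).1
  · intro b hb
    rw [Finset.mem_biUnion]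
    exact ⟨orbitF g B b, Finset.mem_image_of_mem _ hb, self_mem_orbitF hb⟩

lemma singleton_orb_fixed {g : Equiv.Perm (Fin n)} {B : Finset (Finset (Fin n))}
    (hg : IsSTSAuto n B g) {o : Finset (Finset (Fin n))} (ho : o ∈ Orbs g B)
    {b : Finset (Fin n)} (hob : o = {b}) : b ∈ B ∧ psi g b = b := by
  obtain ⟨b0, hb0, rfl⟩ := Finset.mem_image.1 ho
  have hbo : b ∈ orbitF g B b0 := hob ▸ Finset.mem_singleton_self b
  rw [orbitF, Finset.mem_filter] at hbo
  refine ⟨hbo.1, ?_⟩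
  have hpsib : psi g b ∈ orbitF g B b0 := by
    rw [orbitF, Finset.mem_filter]
    refine ⟨?_, hbo.2.trans ⟨1, by rw [zpow_one]⟩⟩
    have := hg b hbo.1
    rw [← psi_apply] at this
    exact this
  rw [hob, Finset.mem_singleton] at hpsib
  exact hpsib

lemma orbs_card_le {g : Equiv.Perm (Fin n)} {B : Finset (Finset (Fin n))}
    (hB : IsSTS n B) (hg : IsSTSAuto n B g) :
    2 * (Orbs g B).card ≤ B.card +
      (B.filter (fun b => psi g b = b)).card := by
  have hsum : ∑ o ∈ Orbs g B, o.card = B.card := by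
    conv_rhs => rw [← orbs_biUnion (g := g) (B := B)]
    rw [Finset.card_biUnion orbs_disjoint]
  have hstep : 2 * (Orbs g B).card ≤
      ∑ o ∈ Orbs g B, o.card + ((Orbs g B).filter (fun o => o.card = 1)).card := by
    rw [Finset.card_filter, ← Finset.sum_add_distrib]
    calc 2 * (Orbs g B).card = ∑ _o ∈ Orbs g B, 2 := by
          rw [Finset.sum_const, smul_eq_mul, Nat.mul_comm]
    _ ≤ _ := by
        apply Finset.sum_le_sum
        intro o ho
        by_cases h1 : o.card = 1
        · rw [if_pos h1, h1]
        · rw [if_neg h1]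
          have hne : o.Nonempty := by
            obtain ⟨b, hb, rfl⟩ := Finset.mem_image.1 ho
            exact ⟨b, self_mem_orbitF hb⟩
          have := Finset.card_pos.2 hne
          omega
  have hsing : ((Orbs g B).filter (fun o => o.card = 1)).card ≤
      (B.filter (fun b => psi g b = b)).card := by
    set κ : Finset (Finset (Fin n)) → Finset (Fin n) := fun o =>
      if h : ∃ b, o = {b} then h.choose else ∅ with hκ
    apply Finset.card_le_card_of_injOn κ
    · intro o ho
      rw [Finset.mem_coe, Finset.mem_filter] at ho
      have hex : ∃ b, o = {b} := Finset.card_eq_one.1 ho.2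
      have hκo : o = {κ o} := by rw [hκ]; simp only [dif_pos hex]; exact hex.choose_spec
      obtain ⟨h1, h2⟩ := singleton_orb_fixed hg ho.1 hκo
      rw [Finset.mem_coe, Finset.mem_filter]
      exact ⟨h1, h2⟩
    · intro o1 h1 o2 h2 heq
      rw [Finset.mem_coe, Finset.mem_filter] at h1 h2
      have hex1 : ∃ b, o1 = {b} := Finset.card_eq_one.1 h1.2
      have hex2 : ∃ b, o2 = {b} := Finset.card_eq_one.1 h2.2
      have hκ1 : o1 = {κ o1} := by rw [hκ]; simp only [dif_pos hex1]; exact hex1.choose_spec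
      have hκ2 : o2 = {κ o2} := by rw [hκ]; simp only [dif_pos hex2]; exact hex2.choose_spec
      rw [hκ1, hκ2, heq]
  omega

lemma fixed_card_split {g : Equiv.Perm (Fin n)} (B : Finset (Finset (Fin n))) :
    (B.filter (fun b => psi g b = b)).card ≤
      (B.filter (fun b => b ⊆ Fx g)).card +
      (B.filter (fun b => psi g b = b ∧ ¬ b ⊆ Fx g)).card := by
  have h := Finset.card_filter_add_card_filter_not
    (s := B.filter (fun b => psi g b = b)) (p := fun b => b ⊆ Fx g)
  have h1 : (B.filter (fun b => psi g b = b)).filter (fun b => b ⊆ Fx g) ⊆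
      B.filter (fun b => b ⊆ Fx g) := by
    intro b hb
    rw [Finset.mem_filter] at hb ⊢
    exact ⟨(Finset.mem_filter.1 hb.1).1, hb.2⟩
  have h2 : (B.filter (fun b => psi g b = b)).filter (fun b => ¬ b ⊆ Fx g) =
      B.filter (fun b => psi g b = b ∧ ¬ b ⊆ Fx g) := by
    rw [Finset.filter_filter]
  calc (B.filter (fun b => psi g b = b)).card
      = ((B.filter (fun b => psi g b = b)).filter (fun b => b ⊆ Fx g)).card +
        ((B.filter (fun b => psi g b = b)).filter (fun b => ¬ b ⊆ Fx g)).card := h.symm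
  _ ≤ _ :=
      Nat.add_le_add (Finset.card_le_card h1) (le_of_eq (by rw [h2]))


lemma mul_pred_add (m : ℕ) : 2 * m.choose 2 + m = m * m := by
  rw [two_mul_choose_two]
  rcases m with - | k
  · simp
  · simp only [Nat.add_sub_cancel]
    ring

lemma orbs_card_bound {B : Finset (Finset (Fin n))} {g : Equiv.Perm (Fin n)}
    (hB : IsSTS n B) (hg : IsSTSAuto n B g) (hgne : g ≠ 1) :
    48 * (Orbs g B).card ≤ 5 * n ^ 2 + 8 * n := by
  have hA := orbs_card_le hB hg
  have hBB := fixed_card_split (g := g) B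
  have hC := count_blocks_in hB (Fx g)
  have hD := mul_pred_add (Fx g).card
  have hE := fixed_not_sub_card hB hg
  have hG := six_mul_card hB
  have hG2 := mul_pred_add n
  have hG3 : 6 * B.card + n = n * n := by
    have := two_mul_choose_two n
    omega
  have hH := fx_card_bound hB hg hgne
  have hint := Nat.mul_le_mul hH hH
  nlinarith [hA, hBB, hC, hD, hE, hG3, hH, hint, sq_nonneg n]


noncomputable def allPairs (n : ℕ) : Finset (Finset (Fin n)) :=
  (Finset.univ : Finset (Fin n)).powersetCard 2

noncomputable def covP (g : Equiv.Perm (Fin n)) (C : Finset (Finset (Fin n))) :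
    Finset (Finset (Fin n)) :=
  (allPairs n).filter (fun p => ∃ b ∈ C, ∃ c, (psi g).SameCycle b c ∧ p ⊆ c)

noncomputable def decodeAux (g : Equiv.Perm (Fin n)) (e : ℕ → Fin n) :
    ℕ → Finset (Finset (Fin n))
  | 0 => ∅
  | i + 1 =>
    if h : ((allPairs n) \ covP g (decodeAux g e i)).Nonempty
    then insert (insert (e i) h.choose) (decodeAux g e i)
    else decodeAux g e i

lemma decodeAux_congr (g : Equiv.Perm (Fin n)) {e e' : ℕ → Fin n} (i : ℕ)
    (h : ∀ j < i, e j = e' j) : decodeAux g e i = decodeAux g e' i := by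
  induction i with
  | zero => rfl
  | succ i ih =>
    have hi := ih (fun j hj => h j (Nat.lt_succ_of_lt hj))
    simp only [decodeAux, hi, h i (Nat.lt_succ_self i)]

noncomputable def recP (g : Equiv.Perm (Fin n)) (e : ℕ → Fin n) (L : ℕ) :
    Finset (Finset (Fin n)) :=
  Finset.univ.filter (fun c => ∃ b ∈ decodeAux g e L, (psi g).SameCycle b c)

lemma exists_encode {B : Finset (Finset (Fin n))} {g : Equiv.Perm (Fin n)}
    (hB : IsSTS n B) (hg : IsSTSAuto n B g) (hn : 0 < n) {K : ℕ}
    (hK : (Orbs g B).card ≤ K) :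
    ∃ e : ℕ → Fin n, recP g e (K + 1) = B := by
  have main : ∀ i : ℕ, ∃ e : ℕ → Fin n,
      decodeAux g e i ⊆ B ∧
      (∀ b1 ∈ decodeAux g e i, ∀ b2 ∈ decodeAux g e i, b1 ≠ b2 →
        ¬ (psi g).SameCycle b1 b2) ∧
      (((allPairs n) \ covP g (decodeAux g e i)).Nonempty →
        i ≤ (decodeAux g e i).card) := by
    intro i
    induction i with
    | zero =>
      refine ⟨fun _ => ⟨0, hn⟩, ?_, ?_, ?_⟩
      · simp [decodeAux]
      · simp [decodeAux]
      · simp [decodeAux]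
    | succ i ih =>
      obtain ⟨e, hsub, hpair, hcard⟩ := ih
      by_cases h : ((allPairs n) \ covP g (decodeAux g e i)).Nonempty
      · set p := h.choose with hpdef
        have hp := h.choose_spec
        rw [Finset.mem_sdiff] at hp
        have hp2 : p.card = 2 := (Finset.mem_powersetCard.1 hp.1).2
        obtain ⟨b, ⟨hbB, hpb⟩, -⟩ := hB.2 p hp2
        obtain ⟨z, hzp, hbz⟩ := third_point (hB.1 b hbB) hp2 hpb
        have hbC : b ∉ decodeAux g e i := by
          intro hbC
          apply hp.2
          simp only [covP, Finset.mem_filter]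
          exact ⟨hp.1, b, hbC, b, Equiv.Perm.SameCycle.refl _ _, hpb⟩
        have hbcyc : ∀ c ∈ decodeAux g e i, ¬ (psi g).SameCycle c b := by
          intro c hc hcyc
          apply hp.2
          simp only [covP, Finset.mem_filter]
          exact ⟨hp.1, c, hc, b, hcyc, hpb⟩
        have he : decodeAux g (Function.update e i z) i = decodeAux g e i :=
          decodeAux_congr g i (fun j hj => by
            rw [Function.update_of_ne (Nat.ne_of_lt hj)])
        have hdec : decodeAux g (Function.update e i z) (i + 1) =
            insert b (decodeAux g e i) := by
          simp only [decodeAux, he]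
          rw [dif_pos h, Function.update_self, ← hpdef, ← hbz]
        refine ⟨Function.update e i z, ?_, ?_, ?_⟩
        · rw [hdec]
          intro c hc
          rcases Finset.mem_insert.1 hc with rfl | hc
          · exact hbB
          · exact hsub hc
        · rw [hdec]
          intro b1 h1 b2 h2 hne hcyc
          rcases Finset.mem_insert.1 h1 with rfl | h1 <;>
            rcases Finset.mem_insert.1 h2 with h2' | h2'
          · exact hne h2'.symm
          · exact hbcyc b2 h2' hcyc.symm
          · rw [h2'] at hcyc
            exact hbcyc b1 h1 hcyc
          · exact hpair b1 h1 b2 h2' hne hcyc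
        · intro _
          rw [hdec, Finset.card_insert_of_notMem hbC]
          exact Nat.succ_le_succ (hcard h)
      · refine ⟨e, ?_, ?_, ?_⟩
        · rw [show decodeAux g e (i + 1) = decodeAux g e i from by
            simp only [decodeAux]; rw [dif_neg h]]
          exact hsub
        · rw [show decodeAux g e (i + 1) = decodeAux g e i from by
            simp only [decodeAux]; rw [dif_neg h]]
          exact hpair
        · rw [show decodeAux g e (i + 1) = decodeAux g e i from by
            simp only [decodeAux]; rw [dif_neg h]]
          intro hne
          exact absurd hne h
  obtain ⟨e, hsub, hpair, hcard⟩ := main (K + 1)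
  have hcov : allPairs n \ covP g (decodeAux g e (K + 1)) = ∅ := by
    by_contra hne
    have hne' : ((allPairs n) \ covP g (decodeAux g e (K + 1))).Nonempty :=
      Finset.nonempty_iff_ne_empty.2 hne
    have h1 := hcard hne'
    have h2 : (decodeAux g e (K + 1)).card ≤ (Orbs g B).card := by
      apply Finset.card_le_card_of_injOn (orbitF g B)
      · intro b hb
        exact Finset.mem_image_of_mem _ (hsub hb)
      · intro b1 h1' b2 h2' heq
        by_contra hne12
        apply hpair b1 h1' b2 h2' hne12
        have hm : b2 ∈ orbitF g B b2 := self_mem_orbitF (hsub h2')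
        rw [← heq] at hm
        exact (Finset.mem_filter.1 hm).2
    omega
  refine ⟨e, Finset.Subset.antisymm ?_ ?_⟩
  · intro c hc
    simp only [recP, Finset.mem_filter] at hc
    obtain ⟨-, b, hb, hbc⟩ := hc
    exact mem_of_sameCycle hg (hsub hb) hbc
  · intro c hc
    obtain ⟨p, hpc, hp2⟩ := Finset.exists_subset_card_eq
      (show 2 ≤ c.card by rw [hB.1 c hc]; norm_num)
    have hpP : p ∈ allPairs n := Finset.mem_powersetCard.2 ⟨Finset.subset_univ _, hp2⟩
    have hpcov : p ∈ covP g (decodeAux g e (K + 1)) := by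
      by_contra hpc'
      have hmem : p ∈ allPairs n \ covP g (decodeAux g e (K + 1)) :=
        Finset.mem_sdiff.2 ⟨hpP, hpc'⟩
      rw [hcov] at hmem
      exact absurd hmem (Finset.notMem_empty p)
    simp only [covP, Finset.mem_filter] at hpcov
    obtain ⟨-, b, hb, c', hcyc, hpc''⟩ := hpcov
    have hc'B : c' ∈ B := mem_of_sameCycle hg (hsub hb) hcyc
    have hcc : c' = c := block_unique hB hp2 hc'B hc hpc'' hpc
    simp only [recP, Finset.mem_filter]
    exact ⟨Finset.mem_univ c, b, hb, hcc ▸ hcyc⟩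


lemma recP_congr (g : Equiv.Perm (Fin n)) {e e' : ℕ → Fin n} (L : ℕ)
    (h : ∀ j < L, e j = e' j) : recP g e L = recP g e' L := by
  unfold recP
  rw [decodeAux_congr g L h]

attribute [irreducible] decodeAux recP covP psi Orbs orbitF allPairs Fx

lemma card_le_gen (n K : ℕ) (hn : 0 < n)
    (hK : ∀ (B : Finset (Finset (Fin n))) (g : Equiv.Perm (Fin n)),
      IsSTS n B → IsSTSAuto n B g → g ≠ 1 → (Orbs g B).card ≤ K) :
    Nat.card {B : Finset (Finset (Fin n)) // IsSTS n B ∧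
        ∃ g : Equiv.Perm (Fin n), g ≠ 1 ∧ IsSTSAuto n B g} ≤
      n.factorial * n ^ (K + 1) := by
  have hOrb : ∀ s : {B : Finset (Finset (Fin n)) // IsSTS n B ∧
      ∃ g : Equiv.Perm (Fin n), g ≠ 1 ∧ IsSTSAuto n B g},
      (Orbs s.2.2.choose s.1).card ≤ K := by
    intro s
    have hgs := s.2.2.choose_spec
    exact hK s.1 s.2.2.choose s.2.1 hgs.2 hgs.1
  have henc : ∀ s : {B : Finset (Finset (Fin n)) // IsSTS n B ∧
      ∃ g : Equiv.Perm (Fin n), g ≠ 1 ∧ IsSTSAuto n B g},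
      ∃ e : ℕ → Fin n, recP s.2.2.choose e (K + 1) = s.1 :=
    fun s => exists_encode s.2.1 s.2.2.choose_spec.2 hn (hOrb s)
  have hinj : Function.Injective (fun s : {B : Finset (Finset (Fin n)) // IsSTS n B ∧
      ∃ g : Equiv.Perm (Fin n), g ≠ 1 ∧ IsSTSAuto n B g} =>
      ((s.2.2.choose, fun i => (henc s).choose i.1) :
        Equiv.Perm (Fin n) × (Fin (K + 1) → Fin n))) := by
    intro s t hst
    simp only [Prod.mk.injEq] at hst
    have h1 : s.2.2.choose = t.2.2.choose := hst.1
    have h2 : ∀ j, j < K + 1 → (henc s).choose j = (henc t).choose j := by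
      intro j hj
      exact congrFun hst.2 ⟨j, hj⟩
    have h3 := (henc s).choose_spec
    have h4 := (henc t).choose_spec
    apply Subtype.ext
    calc s.1 = recP s.2.2.choose (henc s).choose (K + 1) := h3.symm
    _ = recP s.2.2.choose (henc t).choose (K + 1) := recP_congr _ _ h2
    _ = recP t.2.2.choose (henc t).choose (K + 1) :=
        congrArg (fun g' => recP g' (henc t).choose (K + 1)) h1
    _ = t.1 := h4
  calc Nat.card {B : Finset (Finset (Fin n)) // IsSTS n B ∧
        ∃ g : Equiv.Perm (Fin n), g ≠ 1 ∧ IsSTSAuto n B g}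
      = Fintype.card {B : Finset (Finset (Fin n)) // IsSTS n B ∧
        ∃ g : Equiv.Perm (Fin n), g ≠ 1 ∧ IsSTSAuto n B g} := Nat.card_eq_fintype_card
  _ ≤ Fintype.card (Equiv.Perm (Fin n) × (Fin (K + 1) → Fin n)) :=
      Fintype.card_le_of_injective _ hinj
  _ = n.factorial * n ^ (K + 1) := by
      rw [Fintype.card_prod, Fintype.card_perm, Fintype.card_fun]
      simp

lemma card_le_main (n : ℕ) (hn : 0 < n) :
    Nat.card {B : Finset (Finset (Fin n)) // IsSTS n B ∧
        ∃ g : Equiv.Perm (Fin n), g ≠ 1 ∧ IsSTSAuto n B g} ≤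
      n.factorial * n ^ ((5 * n ^ 2 + 8 * n) / 48 + 1) := by
  apply card_le_gen n _ hn
  intro B g hB hg hgne
  have h48 := orbs_card_bound hB hg hgne
  rw [Nat.le_div_iff_mul_le (by norm_num : 0 < 48)]
  omega

lemma log_le_div_e {x : ℝ} (hx : 1 ≤ x) : Real.exp 1 * Real.log x ≤ x := by
  have h := Real.add_one_le_exp (Real.log x - 1)
  rw [Real.exp_sub, Real.exp_log (by linarith : (0:ℝ) < x)] at h
  have he := Real.exp_pos 1
  have h2 : (Real.log x - 1 + 1) * Real.exp 1 ≤ x / Real.exp 1 * Real.exp 1 := by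
    apply mul_le_mul_of_nonneg_right h (le_of_lt he)
  rw [div_mul_cancel₀ _ (ne_of_gt he)] at h2
  nlinarith [he]

lemma log_85 : (2/5 : ℝ) ≤ Real.log (8/5) := by
  rw [Real.le_log_iff_exp_le (by norm_num : (0:ℝ) < 8/5)]
  by_contra hlt
  push_neg at hlt
  have h5 : Real.exp (2/5) ^ (5:ℕ) = Real.exp 2 := by
    rw [← Real.exp_nat_mul]
    norm_num
  have hb : ((8:ℝ)/5) ^ (5:ℕ) < Real.exp (2/5) ^ (5:ℕ) := by
    apply pow_lt_pow_left₀ hlt (by norm_num) (by norm_num)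
  rw [h5] at hb
  have he2 : Real.exp 2 ≤ 7.39 := by
    have h1 : Real.exp 2 = Real.exp 1 * Real.exp 1 := by
      rw [← Real.exp_add]; norm_num
    have := Real.exp_one_lt_d9
    nlinarith [Real.exp_pos 1]
  norm_num at hb
  linarith

lemma numeric_main {n : ℕ} (hn : 5 ≤ n) :
    ((n : ℝ)) ^ ((5 * n ^ 2 + 8 * n) / 48 + 1) ≤
      (8 * (n : ℝ) * Real.exp 1 / 5) ^ (5 * (n : ℝ) ^ 2 / 48) := by
  set N : ℝ := (n : ℝ) with hN
  have hN5 : (5:ℝ) ≤ N := by rw [hN]; exact_mod_cast hn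
  have hN1 : (1:ℝ) < N := by linarith
  have hN0 : (0:ℝ) < N := by linarith
  set k : ℕ := (5 * n ^ 2 + 8 * n) / 48 + 1 with hk
  have hkle : (k : ℝ) ≤ 5 * N ^ 2 / 48 + N / 6 + 1 := by
    have h1 : (((5 * n ^ 2 + 8 * n) / 48 : ℕ) : ℝ) ≤ ((5 * n ^ 2 + 8 * n : ℕ) : ℝ) / 48 :=
      Nat.cast_div_le
    have h2 : ((5 * n ^ 2 + 8 * n : ℕ) : ℝ) = 5 * N ^ 2 + 8 * N := by push_cast; ring
    rw [h2] at h1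
    have : (k : ℝ) = (((5 * n ^ 2 + 8 * n) / 48 : ℕ) : ℝ) + 1 := by
      rw [hk]; push_cast; ring
    rw [this]
    linarith
  have hc0 : (0:ℝ) < 8 * N * Real.exp 1 / 5 := by
    have := Real.exp_pos 1
    positivity
  rw [← Real.rpow_natCast N k]
  rw [Real.rpow_def_of_pos hN0, Real.rpow_def_of_pos hc0]
  apply Real.exp_le_exp.2
  have hlogc : Real.log N + 1 + Real.log (8/5) ≤ Real.log (8 * N * Real.exp 1 / 5) := by
    have hrw : 8 * N * Real.exp 1 / 5 = (8/5) * N * Real.exp 1 := by ring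
    rw [hrw, Real.log_mul (by positivity) (ne_of_gt (Real.exp_pos 1)),
      Real.log_mul (by norm_num) (ne_of_gt hN0), Real.log_exp]
    linarith
  have hlogN : 0 ≤ Real.log N := Real.log_nonneg (le_of_lt hN1)
  have hle : Real.exp 1 * Real.log N ≤ N := log_le_div_e (le_of_lt hN1)
  have hl85 := log_85
  have he := Real.exp_one_gt_d9
  have halpha : (0:ℝ) ≤ 5 * N ^ 2 / 48 := by positivity
  have key : (N / 6 + 1) * Real.log N ≤ 5 * N ^ 2 / 48 * (1 + Real.log (8/5)) := by
    have h1 : (N / 6 + 1) * Real.log N * Real.exp 1 ≤ (N / 6 + 1) * N := by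
      have := mul_le_mul_of_nonneg_left hle (by linarith : (0:ℝ) ≤ N / 6 + 1)
      nlinarith [this]
    have h2 : (N / 6 + 1) * N ≤ 5 * N ^ 2 / 48 * (7/5) * Real.exp 1 := by
      nlinarith [he, hN5]
    have h3 : 5 * N ^ 2 / 48 * (7/5) ≤ 5 * N ^ 2 / 48 * (1 + Real.log (8/5)) := by
      apply mul_le_mul_of_nonneg_left _ halpha
      linarith
    have hexp := Real.exp_pos 1
    nlinarith [h1, h2, h3, mul_le_mul_of_nonneg_right h3 (le_of_lt hexp)]
  calc Real.log N * (k : ℝ) = (k : ℝ) * Real.log N := by ring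
  _ ≤ (5 * N ^ 2 / 48 + N / 6 + 1) * Real.log N :=
      mul_le_mul_of_nonneg_right hkle hlogN
  _ = 5 * N ^ 2 / 48 * Real.log N + (N / 6 + 1) * Real.log N := by ring
  _ ≤ 5 * N ^ 2 / 48 * Real.log N + 5 * N ^ 2 / 48 * (1 + Real.log (8/5)) := by
      linarith [key]
  _ = 5 * N ^ 2 / 48 * (Real.log N + 1 + Real.log (8/5)) := by ring
  _ ≤ 5 * N ^ 2 / 48 * Real.log (8 * N * Real.exp 1 / 5) :=
      mul_le_mul_of_nonneg_left hlogc halpha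
  _ = Real.log (8 * N * Real.exp 1 / 5) * (5 * N ^ 2 / 48) := by ring

end STSAux

/-- The number of Steiner triple systems on an `n`-element point set admitting
at least one non-identity automorphism is at most `n! · (8ne/5) ^ (5n²/48)`. -/
theorem count_sts_with_nontrivial_auto (n : ℕ) :
    (Nat.card {B : Finset (Finset (Fin n)) // IsSTS n B ∧
        ∃ g : Equiv.Perm (Fin n), g ≠ 1 ∧ IsSTSAuto n B g} : ℝ) ≤
      (n.factorial : ℝ) * (8 * (n : ℝ) * Real.exp 1 / 5) ^ (5 * (n : ℝ) ^ 2 / 48) := by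
  have hrpow0 : (0:ℝ) ≤ (8 * (n : ℝ) * Real.exp 1 / 5) ^ (5 * (n : ℝ) ^ 2 / 48) :=
    Real.rpow_nonneg (by positivity) _
  have hfac0 : (0:ℝ) ≤ (n.factorial : ℝ) := Nat.cast_nonneg _
  rcases Nat.lt_or_ge n 5 with h5 | h5
  · interval_cases n
    · haveI he : IsEmpty {B : Finset (Finset (Fin 0)) // IsSTS 0 B ∧
          ∃ g : Equiv.Perm (Fin 0), g ≠ 1 ∧ IsSTSAuto 0 B g} := by
        refine ⟨fun s => ?_⟩
        obtain ⟨g, hg, -⟩ := s.2.2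
        exact hg (Equiv.ext fun x => x.elim0)
      rw [Nat.card_of_isEmpty]
      simpa using mul_nonneg hfac0 hrpow0
    · haveI he : IsEmpty {B : Finset (Finset (Fin 1)) // IsSTS 1 B ∧
          ∃ g : Equiv.Perm (Fin 1), g ≠ 1 ∧ IsSTSAuto 1 B g} := by
        refine ⟨fun s => ?_⟩
        obtain ⟨g, hg, -⟩ := s.2.2
        exact hg (Equiv.ext fun x => Subsingleton.elim _ _)
      rw [Nat.card_of_isEmpty]
      simpa using mul_nonneg hfac0 hrpow0
    · haveI he : IsEmpty {B : Finset (Finset (Fin 2)) // IsSTS 2 B ∧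
          ∃ g : Equiv.Perm (Fin 2), g ≠ 1 ∧ IsSTSAuto 2 B g} := by
        refine ⟨fun s => ?_⟩
        obtain ⟨b, ⟨hbB, -⟩, -⟩ := s.2.1.2 {0, 1} (by decide)
        have h3 := s.2.1.1 b hbB
        have h4 := Finset.card_le_univ b
        rw [h3, Fintype.card_fin] at h4
        omega
      rw [Nat.card_of_isEmpty]
      simpa using mul_nonneg hfac0 hrpow0
    · have hBval : ∀ B : Finset (Finset (Fin 3)), IsSTS 3 B → B = {Finset.univ} := by
        intro B hB
        have huniv : ∀ b ∈ B, b = Finset.univ := by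
          intro b hb
          apply Finset.eq_univ_of_card
          rw [hB.1 b hb, Fintype.card_fin]
        obtain ⟨b, ⟨hbB, -⟩, -⟩ := hB.2 {0, 1} (by decide)
        apply Finset.Subset.antisymm
        · intro c hc
          rw [Finset.mem_singleton]
          exact huniv c hc
        · intro c hc
          rw [Finset.mem_singleton] at hc
          rw [hc, ← huniv b hbB]
          exact hbB
      haveI hsub : Subsingleton {B : Finset (Finset (Fin 3)) // IsSTS 3 B ∧
          ∃ g : Equiv.Perm (Fin 3), g ≠ 1 ∧ IsSTSAuto 3 B g} := by
        constructor
        intro s t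
        apply Subtype.ext
        rw [hBval s.1 s.2.1, hBval t.1 t.2.1]
      have hone : (1:ℝ) ≤ (8 * (3:ℝ) * Real.exp 1 / 5) ^ (5 * (3:ℝ) ^ 2 / 48) := by
        apply Real.one_le_rpow _ (by norm_num)
        nlinarith [Real.exp_one_gt_d9]
      have hcard1 : Nat.card {B : Finset (Finset (Fin 3)) // IsSTS 3 B ∧
          ∃ g : Equiv.Perm (Fin 3), g ≠ 1 ∧ IsSTSAuto 3 B g} ≤ 1 := by
        rcases isEmpty_or_nonempty {B : Finset (Finset (Fin 3)) // IsSTS 3 B ∧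
            ∃ g : Equiv.Perm (Fin 3), g ≠ 1 ∧ IsSTSAuto 3 B g} with he | hne
        · rw [Nat.card_of_isEmpty]; omega
        · rw [Nat.card_unique]
      have hc' : (Nat.card {B : Finset (Finset (Fin 3)) // IsSTS 3 B ∧
          ∃ g : Equiv.Perm (Fin 3), g ≠ 1 ∧ IsSTSAuto 3 B g} : ℝ) ≤ 1 := by
        exact_mod_cast hcard1
      have hfac : ((Nat.factorial 3 : ℕ) : ℝ) = 6 := by norm_num [Nat.factorial]
      calc (Nat.card {B : Finset (Finset (Fin 3)) // IsSTS 3 B ∧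
          ∃ g : Equiv.Perm (Fin 3), g ≠ 1 ∧ IsSTSAuto 3 B g} : ℝ) ≤ 1 := hc'
      _ ≤ (Nat.factorial 3 : ℝ) * (8 * (3:ℝ) * Real.exp 1 / 5) ^ (5 * (3:ℝ) ^ 2 / 48) := by
          rw [hfac]
          nlinarith [hone]
    · haveI he : IsEmpty {B : Finset (Finset (Fin 4)) // IsSTS 4 B ∧
          ∃ g : Equiv.Perm (Fin 4), g ≠ 1 ∧ IsSTSAuto 4 B g} := by
        refine ⟨fun s => ?_⟩
        have h6 := STSAux.six_mul_card s.2.1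
        norm_num at h6
        have h2 : 1 < s.1.card := by omega
        obtain ⟨b, hb, b', hb', hne⟩ := Finset.one_lt_card.1 h2
        have hcu := Finset.card_union_add_card_inter b b'
        have hbu : (b ∪ b').card ≤ 4 := by
          have := Finset.card_le_univ (b ∪ b')
          rwa [Fintype.card_fin] at this
        have hb3 := s.2.1.1 b hb
        have hb3' := s.2.1.1 b' hb'
        have hint : 2 ≤ (b ∩ b').card := by omega
        obtain ⟨p, hpsub, hp2⟩ := Finset.exists_subset_card_eq hint
        exact hne (STSAux.block_unique s.2.1 hp2 hb hb'
          (hpsub.trans Finset.inter_subset_left) (hpsub.trans Finset.inter_subset_right))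
      rw [Nat.card_of_isEmpty]
      simpa using mul_nonneg hfac0 hrpow0
  · have hn : 0 < n := by omega
    have hcard := STSAux.card_le_main n hn
    have hnum := STSAux.numeric_main h5
    calc (Nat.card {B : Finset (Finset (Fin n)) // IsSTS n B ∧
          ∃ g : Equiv.Perm (Fin n), g ≠ 1 ∧ IsSTSAuto n B g} : ℝ)
        ≤ ((n.factorial * n ^ ((5 * n ^ 2 + 8 * n) / 48 + 1) : ℕ) : ℝ) := by
          exact_mod_cast hcard
    _ = (n.factorial : ℝ) * (n : ℝ) ^ ((5 * n ^ 2 + 8 * n) / 48 + 1) := by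
          push_cast
          ring
    _ ≤ (n.factorial : ℝ) * (8 * (n : ℝ) * Real.exp 1 / 5) ^ (5 * (n : ℝ) ^ 2 / 48) :=
          mul_le_mul_of_nonneg_left hnum hfac0
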